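/- Let {X_1, X_2} be a perfect 2-coloring of J(10,3) with quotient matrix [[12,9],[9,12]], and suppose X_1 has type 0 (i.e., |ab* ∩ X_1| ≡ 0 mod 3 for all distinct a,b). Then for every abc ∈ X_1, the three counts of X_1-neighbors of abc containing {a,b}, {a,c}, {b,c} respectively form the multiset {2,5,5}. -/

import Mathlib

/-- The Johnson graph `J(n,k)`: vertices are the `k`-element subsets of an
`n`-element set, two vertices adjacent when their intersection has `k-1` elements. -/
def johnsonGraph (n k : ℕ) : SimpleGraph {s : Finset (Fin n) // s.card = k} where
  Adj x y := (x.1 ∩ y.1).card = k - 1 ∧ x ≠ y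
  symm := by
    constructor
    intro x y h
    exact ⟨by rw [Finset.inter_comm]; exact h.1, h.2.symm⟩
  loopless := by
    constructor
    intro x h
    exact h.2 rfl

instance (n k : ℕ) : DecidableRel (johnsonGraph n k).Adj :=
  fun x y => inferInstanceAs (Decidable ((x.1 ∩ y.1).card = k - 1 ∧ x ≠ y))

/-- A perfect 2-coloring of a finite graph `G` with quotient matrix
`[[p11, p12], [p21, p22]]`: a partition of the vertices into nonempty parts
`X1`, `X2` such that every vertex of `Xi` has exactly `p i j` neighbors in `Xj`. -/
def IsPerfect2Coloring {V : Type*} [Fintype V] [DecidableEq V]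
    (G : SimpleGraph V) [DecidableRel G.Adj] (X1 X2 : Finset V)
    (p11 p12 p21 p22 : ℕ) : Prop :=
  X1 ∪ X2 = Finset.univ ∧ Disjoint X1 X2 ∧ X1.Nonempty ∧ X2.Nonempty ∧
  (∀ v ∈ X1, (G.neighborFinset v ∩ X1).card = p11 ∧
             (G.neighborFinset v ∩ X2).card = p12) ∧
  (∀ v ∈ X2, (G.neighborFinset v ∩ X1).card = p21 ∧
             (G.neighborFinset v ∩ X2).card = p22)

/-- The number of neighbors of `v` lying in `X1` that contain both `a` and `b`. -/
def rowCount (X1 : Finset {s : Finset (Fin 10) // s.card = 3})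
    (v : {s : Finset (Fin 10) // s.card = 3}) (a b : Fin 10) : ℕ :=
  (X1.filter (fun w => (johnsonGraph 10 3).Adj v w ∧ a ∈ w.1 ∧ b ∈ w.1)).card

/-- `ab*`: the set of vertices of `J(10,3)` containing both `a` and `b`. -/
def star (a b : Fin 10) : Finset {s : Finset (Fin 10) // s.card = 3} :=
  Finset.univ.filter (fun v => a ∈ v.1 ∧ b ∈ v.1)

lemma mem_star (a b : Fin 10) (w : {s : Finset (Fin 10) // s.card = 3}) :
    w ∈ _root_.star a b ↔ a ∈ w.1 ∧ b ∈ w.1 := by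
  constructor
  · intro hw; exact (Finset.mem_filter.mp hw).2
  · intro hw; exact Finset.mem_filter.mpr ⟨Finset.mem_univ _, hw⟩

lemma star_card : ∀ a b : Fin 10, a ≠ b → (_root_.star a b).card = 8 := by decide

lemma star_inter_card (X : Finset {s : Finset (Fin 10) // s.card = 3})
    (v : {s : Finset (Fin 10) // s.card = 3}) (a b : Fin 10)
    (ha : a ∈ v.1) (hb : b ∈ v.1) (hab : a ≠ b) :
    (_root_.star a b ∩ X).card = rowCount X v a b + (if v ∈ X then 1 else 0) := by
  have hset : X.filter (fun w => (johnsonGraph 10 3).Adj v w ∧ a ∈ w.1 ∧ b ∈ w.1)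
      = (_root_.star a b ∩ X).erase v := by
    ext w
    rw [Finset.mem_filter, Finset.mem_erase, Finset.mem_inter, mem_star]
    constructor
    · rintro ⟨hwX, ⟨hcard, hne⟩, haw, hbw⟩
      exact ⟨fun he => hne (he ▸ rfl), ⟨haw, hbw⟩, hwX⟩
    · rintro ⟨hne, ⟨haw, hbw⟩, hwX⟩
      refine ⟨hwX, ⟨?_, fun he => hne (he ▸ rfl)⟩, haw, hbw⟩
      have hsub : ({a, b} : Finset (Fin 10)) ⊆ v.1 ∩ w.1 := by
        intro x hx
        simp only [Finset.mem_insert, Finset.mem_singleton] at hx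
        rcases hx with rfl | rfl
        · exact Finset.mem_inter.mpr ⟨ha, haw⟩
        · exact Finset.mem_inter.mpr ⟨hb, hbw⟩
      have h2 : 2 ≤ (v.1 ∩ w.1).card := by
        have hc2 : ({a, b} : Finset (Fin 10)).card = 2 := by
          rw [Finset.card_insert_of_notMem (by simp [hab]), Finset.card_singleton]
        calc 2 = ({a, b} : Finset (Fin 10)).card := hc2.symm
          _ ≤ (v.1 ∩ w.1).card := Finset.card_le_card hsub
      have h3 : (v.1 ∩ w.1).card ≤ 3 := by
        calc (v.1 ∩ w.1).card ≤ v.1.card := Finset.card_le_card Finset.inter_subset_left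
          _ = 3 := v.2
      have h23 : (v.1 ∩ w.1).card = 2 ∨ (v.1 ∩ w.1).card = 3 := by omega
      rcases h23 with hc | hc
      · exact hc
      · exfalso
        have heq : v.1 ∩ w.1 = v.1 :=
          Finset.eq_of_subset_of_card_le Finset.inter_subset_left (by rw [hc, v.2])
        have hsub2 : v.1 ⊆ w.1 := heq ▸ Finset.inter_subset_right
        have hvw : v.1 = w.1 := Finset.eq_of_subset_of_card_le hsub2 (by rw [v.2, w.2])
        exact hne (Subtype.ext hvw.symm)
  rw [rowCount, hset]
  by_cases hvX : v ∈ X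
  · have hvmem : v ∈ _root_.star a b ∩ X :=
      Finset.mem_inter.mpr ⟨(mem_star a b v).mpr ⟨ha, hb⟩, hvX⟩
    rw [Finset.card_erase_of_mem hvmem, if_pos hvX]
    have hpos : 1 ≤ (_root_.star a b ∩ X).card := Finset.card_pos.mpr ⟨v, hvmem⟩
    omega
  · have hvmem : v ∉ _root_.star a b ∩ X := fun hm => hvX (Finset.mem_inter.mp hm).2
    rw [Finset.erase_eq_of_notMem hvmem, if_neg hvX]
    omega

lemma exactly_one (v w : {s : Finset (Fin 10) // s.card = 3}) (a b c : Fin 10)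
    (habc : v.1 = {a, b, c}) (hab : a ≠ b) (hac : a ≠ c) (hbc : b ≠ c)
    (hadj : (johnsonGraph 10 3).Adj v w) :
    ((if a ∈ w.1 ∧ b ∈ w.1 then 1 else 0) + (if a ∈ w.1 ∧ c ∈ w.1 then 1 else 0)
      + (if b ∈ w.1 ∧ c ∈ w.1 then 1 else 0) : ℕ) = 1 := by
  have hcard : (v.1 ∩ w.1).card = 2 := hadj.1
  rw [habc] at hcard
  have hfil : ({a, b, c} : Finset (Fin 10)) ∩ w.1
      = ({a, b, c} : Finset (Fin 10)).filter (· ∈ w.1) := by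
    rw [Finset.filter_mem_eq_inter]
  rw [hfil] at hcard
  by_cases haw : a ∈ w.1 <;> by_cases hbw : b ∈ w.1 <;> by_cases hcw : c ∈ w.1 <;>
    rw [Finset.filter_insert, Finset.filter_insert, Finset.filter_singleton] at hcard <;>
    simp only [haw, hbw, hcw, if_true, if_false] at hcard ⊢
  all_goals first
    | (exfalso; simp at hcard; done)
    | (exfalso;
       rw [Finset.card_insert_of_notMem (by simp [hab, hac]),
           Finset.card_insert_of_notMem (by simp [hbc]),
           Finset.card_singleton] at hcard;
       omega)
    | norm_num

lemma row_sum (X : Finset {s : Finset (Fin 10) // s.card = 3})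
    (v : {s : Finset (Fin 10) // s.card = 3}) (a b c : Fin 10)
    (habc : v.1 = {a, b, c}) (hab : a ≠ b) (hac : a ≠ c) (hbc : b ≠ c) :
    rowCount X v a b + rowCount X v a c + rowCount X v b c
      = ((johnsonGraph 10 3).neighborFinset v ∩ X).card := by
  have hnb : (johnsonGraph 10 3).neighborFinset v ∩ X
      = X.filter (fun w => (johnsonGraph 10 3).Adj v w) := by
    ext w
    rw [Finset.mem_inter, Finset.mem_filter, SimpleGraph.mem_neighborFinset, and_comm]
  have hrc : ∀ (p q : Fin 10), rowCount X v p q =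
      ∑ w ∈ X.filter (fun w => (johnsonGraph 10 3).Adj v w),
        (if p ∈ w.1 ∧ q ∈ w.1 then 1 else 0) := by
    intro p q
    rw [rowCount, ← Finset.card_filter, Finset.filter_filter]
  rw [hnb, hrc, hrc, hrc, ← Finset.sum_add_distrib, ← Finset.sum_add_distrib,
    Finset.card_eq_sum_ones]
  apply Finset.sum_congr rfl
  intro w hw
  exact exactly_one v w a b c habc hab hac hbc (Finset.mem_filter.mp hw).2

theorem type0_rowSums_J103
    (X1 X2 : Finset {s : Finset (Fin 10) // s.card = 3})
    (h : IsPerfect2Coloring (johnsonGraph 10 3) X1 X2 12 9 9 12)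
    (htype : ∀ a b : Fin 10, a ≠ b → (star a b ∩ X1).card % 3 = 0)
    (v : {s : Finset (Fin 10) // s.card = 3}) (hv : v ∈ X1)
    (a b c : Fin 10) (habc : v.1 = {a, b, c})
    (hab : a ≠ b) (hac : a ≠ c) (hbc : b ≠ c) :
    ({rowCount X1 v a b, rowCount X1 v a c, rowCount X1 v b c} : Multiset ℕ)
      = {2, 5, 5} := by
  obtain ⟨-, -, -, -, hX1, -⟩ := h
  have hdeg : ((johnsonGraph 10 3).neighborFinset v ∩ X1).card = 12 := (hX1 v hv).1
  have hsum := row_sum X1 v a b c habc hab hac hbc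
  rw [hdeg] at hsum
  have ha : a ∈ v.1 := by rw [habc]; simp
  have hb : b ∈ v.1 := by rw [habc]; simp
  have hc : c ∈ v.1 := by rw [habc]; simp
  have key : ∀ p q : Fin 10, p ∈ v.1 → q ∈ v.1 → p ≠ q →
      rowCount X1 v p q % 3 = 2 ∧ rowCount X1 v p q ≤ 7 := by
    intro p q hp hq hpq
    have h1 := star_inter_card X1 v p q hp hq hpq
    rw [if_pos hv] at h1
    have h2 := htype p q hpq
    have h3 : (_root_.star p q ∩ X1).card ≤ 8 := by
      rw [← star_card p q hpq]
      exact Finset.card_le_card Finset.inter_subset_left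
    omega
  obtain ⟨m1, b1⟩ := key a b ha hb hab
  obtain ⟨m2, b2⟩ := key a c ha hc hac
  obtain ⟨m3, b3⟩ := key b c hb hc hbc
  have hcases : (rowCount X1 v a b = 2 ∧ rowCount X1 v a c = 5 ∧ rowCount X1 v b c = 5)
      ∨ (rowCount X1 v a b = 5 ∧ rowCount X1 v a c = 2 ∧ rowCount X1 v b c = 5)
      ∨ (rowCount X1 v a b = 5 ∧ rowCount X1 v a c = 5 ∧ rowCount X1 v b c = 2) := by
    omega
  rcases hcases with ⟨e1, e2, e3⟩ | ⟨e1, e2, e3⟩ | ⟨e1, e2, e3⟩ <;>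
    rw [e1, e2, e3] <;> try decide
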